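/- In the n-dimensional Morris orientation (n odd), the level function ℓ(v) = |{i : v_i = 0 and Φ(v)_i = -}| does not increase along directed edges: if v → u is a directed edge, then ℓ(u) ≤ ℓ(v). -/

import Mathlib

/-- Flip coordinate `i` of a cube vertex. -/
def cflip {n : ℕ} (v : Fin n → Bool) (i : Fin n) : Fin n → Bool :=
  fun j => if j = i then !v j else v j

/-- `Φ v i = true` means the edge between `v` and `v ⊕ i` is incoming at `v` (sign `+`);
`Φ v i = false` means it is outgoing at `v` (sign `-`). Consistency says the two
endpoints of an edge agree about its direction. -/
def Consistent {n : ℕ} (Φ : (Fin n → Bool) → Fin n → Bool) : Prop :=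
  ∀ v i, Φ (cflip v i) i ≠ Φ v i

/-- `w` lies in the subcube spanned from `u` by the coordinate set `C`. -/
def InSubcube {n : ℕ} (u : Fin n → Bool) (C : Finset (Fin n)) (w : Fin n → Bool) : Prop :=
  ∀ j ∉ C, w j = u j

/-- Every (nonempty) subcube has a unique sink. -/
def HasUniqueSinks {n : ℕ} (Φ : (Fin n → Bool) → Fin n → Bool) : Prop :=
  ∀ (u : Fin n → Bool) (C : Finset (Fin n)),
    ∃! w, InSubcube u C w ∧ ∀ i ∈ C, Φ w i = true

/-- A unique-sink orientation of the `n`-cube. -/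
def IsUSO {n : ℕ} (Φ : (Fin n → Bool) → Fin n → Bool) : Prop :=
  Consistent Φ ∧ HasUniqueSinks Φ

/-- Directed edge relation of the orientation: `v → u`. -/
def Step {n : ℕ} (Φ : (Fin n → Bool) → Fin n → Bool) (v u : Fin n → Bool) : Prop :=
  ∃ i, Φ v i = false ∧ u = cflip v i

/-- Length of the run of `1`s at positions `j+1, j+2, …` (cyclically), i.e. the state
of the Morris transducer just before reading `v j` is `T` iff this run length is odd. -/
def morrisRun {n : ℕ} [NeZero n] (v : Fin n → Bool) (j : Fin n) : ℕ :=
  let K := (Finset.range n).filter (fun k : ℕ => v (j + 1 + (Fin.ofNat n k)) = false)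
  if h : K.Nonempty then K.min' h else 0

/-- The Morris orientation of the `n`-cube (`n` odd), given by the two-state transducer:
the all-ones vertex is the global sink; otherwise the edge at `v` in coordinate `j` is
outgoing (`false`) iff `v j` agrees with the parity of the run of ones above `j`. -/
def morris {n : ℕ} [NeZero n] (v : Fin n → Bool) : Fin n → Bool :=
  fun j =>
    if ∀ i, v i = true then true
    else !(v j == decide (Odd (morrisRun v j)))

/-- The level of a vertex: the number of coordinates carrying the pattern `(0,-)`. -/
def morrisLevel {n : ℕ} [NeZero n] (v : Fin n → Bool) : ℕ :=
  (Finset.univ.filter (fun i => v i = false ∧ morris v i = false)).card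

set_option linter.unusedSectionVars false
set_option linter.unusedVariables false

open Fin.NatCast
open Fin.CommRing

namespace MorrisAux


variable {n : ℕ} [NeZero n]

def off (i j : Fin n) : ℕ := (i - j - 1 : Fin n).val

lemma off_lt (i j : Fin n) : off i j < n := Fin.is_lt _

lemma off_spec (i j : Fin n) : j + 1 + ((off i j : ℕ) : Fin n) = i := by
  simp only [off, Fin.cast_val_eq_self]; ring

lemma off_unique {i j : Fin n} {k : ℕ} (hk : k < n) (h : j + 1 + (k : Fin n) = i) :
    k = off i j := by
  have h2 : (k : Fin n) = i - j - 1 := by rw [← h]; ring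
  rw [off, ← h2, Fin.val_cast_of_lt hk]

lemma add_cast_ne {i : Fin n} {k : ℕ} (hk : k + 1 < n) : i + 1 + (k : Fin n) ≠ i := by
  intro h
  have h1 : ((k + 1 : ℕ) : Fin n) = 0 := by push_cast; linear_combination h
  rw [Fin.natCast_eq_zero] at h1
  have := Nat.le_of_dvd (Nat.succ_pos k) h1
  omega

lemma run_spec (v : Fin n → Bool) (j : Fin n)
    (hE : ∃ k, k < n ∧ v (j + 1 + (k : Fin n)) = false) :
    morrisRun v j < n ∧ v (j + 1 + ((morrisRun v j : ℕ) : Fin n)) = false ∧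
      ∀ k < morrisRun v j, v (j + 1 + (k : Fin n)) = true := by
  obtain ⟨k0, hk0, hv0⟩ := hE
  have hne : ((Finset.range n).filter
      (fun k : ℕ => v (j + 1 + (k : Fin n)) = false)).Nonempty :=
    ⟨k0, by simp [hk0, hv0]⟩
  have hrun : morrisRun v j = ((Finset.range n).filter
      (fun k : ℕ => v (j + 1 + (k : Fin n)) = false)).min' hne := by
    simp only [morrisRun, Fin.ofNat_eq_cast, dif_pos hne]
  have hmem := Finset.min'_mem _ hne
  rw [← hrun] at hmem
  simp only [Finset.mem_filter, Finset.mem_range] at hmem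
  refine ⟨hmem.1, hmem.2, ?_⟩
  intro k hk
  by_contra hkf
  have hkK : k ∈ (Finset.range n).filter
      (fun k : ℕ => v (j + 1 + (k : Fin n)) = false) := by
    simp only [Finset.mem_filter, Finset.mem_range]
    exact ⟨lt_trans hk hmem.1, by simpa using hkf⟩
  have := Finset.min'_le _ _ hkK
  rw [← hrun] at this
  omega

lemma run_eq (v : Fin n → Bool) (j : Fin n) {m : ℕ} (hm : m < n)
    (h0 : v (j + 1 + (m : Fin n)) = false)
    (h1 : ∀ k < m, v (j + 1 + (k : Fin n)) = true) : morrisRun v j = m := by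
  obtain ⟨hlt, hz, hmin⟩ := run_spec v j ⟨m, hm, h0⟩
  rcases Nat.lt_trichotomy (morrisRun v j) m with h | h | h
  · have := h1 _ h; rw [this] at hz; exact absurd hz (by simp)
  · exact h
  · have := hmin _ h; rw [this] at h0; exact absurd h0 (by simp)

lemma exists_zero_offset (v : Fin n → Bool) {j0 : Fin n} (h : v j0 = false) (j : Fin n) :
    ∃ k, k < n ∧ v (j + 1 + (k : Fin n)) = false :=
  ⟨off j0 j, off_lt _ _, by rw [off_spec]; exact h⟩

lemma cflip_self (v : Fin n → Bool) (i : Fin n) : cflip v i i = !v i := by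
  simp [cflip]

lemma cflip_ne (v : Fin n → Bool) {i j : Fin n} (h : j ≠ i) : cflip v i j = v j := by
  simp [cflip, h]

lemma cflip_cflip (v : Fin n → Bool) (i : Fin n) : cflip (cflip v i) i = v := by
  funext j
  by_cases h : j = i <;> simp [cflip, h]


lemma core (v : Fin n → Bool) (i : Fin n) (hvi : v i = true)
    (j : Fin n) (hji : j ≠ i) (hvj : v j = false) :
    morrisRun v j = morrisRun (cflip v i) j ∨
      (morrisRun (cflip v i) j = off i j ∧
        morrisRun v j = off i j + 1 + morrisRun (cflip v i) i) := by
  set u := cflip v i with hu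
  obtain ⟨hmlt, hmz, hmmin⟩ := run_spec v j (exists_zero_offset v hvj j)
  set m := morrisRun v j with hm
  set k0 := off i j with hk0
  have hne_k0m : k0 ≠ m := by
    intro he
    rw [← he, off_spec] at hmz
    rw [hvi] at hmz; exact absurd hmz (by simp)
  have hcast_ne : ∀ k : ℕ, k < n → k ≠ k0 → j + 1 + (k : Fin n) ≠ i := by
    intro k hk hkne he
    exact hkne (off_unique hk he)
  rcases Nat.lt_or_ge m k0 with hlt | hge
  · -- run unchanged
    left
    symm
    apply run_eq u j hmlt
    · rw [hu, cflip_ne v (hcast_ne m hmlt (by omega))]; exact hmz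
    · intro k hk
      rw [hu, cflip_ne v (hcast_ne k (by omega) (by omega))]
      exact hmmin k hk
  · have hk0lt : k0 < m := lt_of_le_of_ne (by omega) hne_k0m
    right
    have huj : morrisRun u j = k0 := by
      apply run_eq u j (off_lt i j)
      · rw [off_spec, hu, cflip_self, hvi]; rfl
      · intro k hk
        rw [hu, cflip_ne v (hcast_ne k (by omega) (by omega))]
        exact hmmin k (by omega)
    refine ⟨huj, ?_⟩
    have hui : u i = false := by rw [hu, cflip_self, hvi]; rfl
    obtain ⟨hrlt, hrz, hrmin⟩ := run_spec u i (exists_zero_offset u hui i)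
    set r := morrisRun u i with hr
    -- position identity: j + 1 + ↑(k0 + 1 + t) = i + 1 + ↑t
    have hpos : ∀ t : ℕ, j + 1 + ((k0 + 1 + t : ℕ) : Fin n) = i + 1 + (t : Fin n) := by
      intro t
      have := off_spec i j
      push_cast
      rw [← hk0] at this  -- maybe noop
      linear_combination this
    set t := m - k0 - 1 with ht
    have hmt : m = k0 + 1 + t := by omega
    rcases Nat.lt_trichotomy t r with h | h | h
    · exfalso
      -- v (j+1+m) = false but equals u(i+1+t) = true
      have h1 : u (i + 1 + (t : Fin n)) = true := hrmin t h
      have h2 : j + 1 + ((m : ℕ) : Fin n) = i + 1 + (t : Fin n) := by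
        rw [hmt]; exact hpos t
      have h3 : i + 1 + (t : Fin n) ≠ i := by
        rw [← h2]; exact hcast_ne m hmlt (by omega)
      rw [hu, cflip_ne v h3] at h1
      rw [h2] at hmz
      rw [hmz] at h1; exact absurd h1 (by simp)
    · omega
    · exfalso
      have hlt2 : k0 + 1 + r < m := by omega
      have h1 : v (j + 1 + ((k0 + 1 + r : ℕ) : Fin n)) = true := hmmin _ hlt2
      have h2 : i + 1 + (r : Fin n) ≠ i := by
        rw [← hpos r]; exact hcast_ne (k0 + 1 + r) (by omega) (by omega)
      rw [hpos r] at h1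
      rw [hu, cflip_ne v h2] at hrz
      rw [hrz] at h1; exact absurd h1 (by simp)

lemma uniq (w : Fin n → Bool) (i : Fin n) {j1 j2 : Fin n}
    (h1 : w j1 = false) (h2 : w j2 = false)
    (e1 : morrisRun w j1 = off i j1) (e2 : morrisRun w j2 = off i j2) : j1 = j2 := by
  have key : ∀ a b : Fin n, w a = false → w b = false →
      morrisRun w b = off i b → off i a < off i b → False := by
    intro a b ha hb eb hab
    obtain ⟨_, _, hbmin⟩ := run_spec w b (exists_zero_offset w hb b)
    set ka := off i a with hka
    set kb := off i b with hkb
    set t := kb - ka - 1 with htd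
    have ht : t < morrisRun w b := by omega
    have hpt : b + 1 + (t : Fin n) = a := by
      have ha' := off_spec i a
      have hb' := off_spec i b
      have hkbt : (kb : Fin n) = (ka : Fin n) + 1 + (t : Fin n) := by
        have : kb = ka + 1 + t := by omega
        rw [this]; push_cast; ring
      rw [hkbt] at hb'
      linear_combination hb' - ha'
    have := hbmin t ht
    rw [hpt, ha] at this
    exact absurd this (by simp)
  rcases Nat.lt_trichotomy (off i j1) (off i j2) with h | h | h
  · exact absurd (key j1 j2 h1 h2 e2 h) (by simp)
  · -- equal offsets → equal points
    have ha := off_spec i j1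
    have hb := off_spec i j2
    rw [h] at ha
    have : j1 + 1 + ((off i j2 : ℕ) : Fin n) = j2 + 1 + ((off i j2 : ℕ) : Fin n) := by
      rw [ha, hb]
    exact add_right_cancel (add_right_cancel this)
  · exact absurd (key j2 j1 h2 h1 e1 h) (by simp)


/-- The set of coordinates contributing to the level, in run terms. -/
def S (w : Fin n → Bool) : Finset (Fin n) :=
  Finset.univ.filter (fun j => w j = false ∧ Even (morrisRun w j))

lemma level_eq_card (w : Fin n → Bool) (hw : ¬ ∀ j, w j = true) :
    morrisLevel w = (S w).card := by
  unfold morrisLevel S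
  congr 1
  apply Finset.filter_congr
  intro j _
  simp only [morris, if_neg hw]
  constructor
  · rintro ⟨h0, h1⟩
    refine ⟨h0, ?_⟩
    rw [h0] at h1
    simp only [Bool.false_beq, Bool.not_not] at h1
    rw [decide_eq_false_iff_not] at h1
    exact Nat.not_odd_iff_even.mp h1
  · rintro ⟨h0, h1⟩
    refine ⟨h0, ?_⟩
    rw [h0]
    simp only [Bool.false_beq, Bool.not_not]
    rw [decide_eq_false_iff_not]
    exact Nat.not_odd_iff_even.mpr h1

lemma level_eq_zero (w : Fin n → Bool) (hw : ∀ j, w j = true) :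
    morrisLevel w = 0 := by
  unfold morrisLevel
  rw [Finset.card_eq_zero, Finset.filter_eq_empty_iff]
  intro j _
  rw [hw j]
  simp

end MorrisAux

open MorrisAux in
/-- in the Morris orientation (`n` odd), the level does not
increase along directed edges. -/
theorem morris_level_monotone {n : ℕ} [NeZero n] (hn : Odd n)
    (v u : Fin n → Bool) (h : Step (morris) v u) :
    morrisLevel u ≤ morrisLevel v := by
  obtain ⟨i, hΦ, hu⟩ := h
  have hvall : ¬ ∀ j, v j = true := by
    intro hall
    rw [morris, if_pos hall] at hΦ
    exact absurd hΦ (by simp)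
  have hd : v i = decide (Odd (morrisRun v i)) := by
    rw [morris, if_neg hvall] at hΦ
    simpa using hΦ
  subst hu
  set u := cflip v i with hu
  rcases Bool.eq_false_or_eq_true (v i) with hvi | hvi
  · -- Case B : v i = true, run above i odd
    have hrv : Odd (morrisRun v i) := by
      rw [hvi] at hd
      have h2 := hd.symm
      rwa [decide_eq_true_eq] at h2
    have hui : u i = false := by rw [hu, cflip_self, hvi]; rfl
    have huall : ¬ ∀ j, u j = true := by
      intro hall; rw [hall i] at hui; exact absurd hui (by simp)
    obtain ⟨j0, hj0⟩ : ∃ j0, v j0 = false := by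
      push_neg at hvall
      obtain ⟨j0, hj0⟩ := hvall
      exact ⟨j0, by simpa using hj0⟩
    obtain ⟨hrlt, hrz, hrmin⟩ := run_spec v i (exists_zero_offset v hj0 i)
    have hru : morrisRun u i = morrisRun v i := by
      apply run_eq u i hrlt
      · by_cases he : i + 1 + ((morrisRun v i : ℕ) : Fin n) = i
        · rw [he]; exact hui
        · rw [hu, cflip_ne v he]; exact hrz
      · intro k hk
        rw [hu, cflip_ne v (add_cast_ne (by omega))]
        exact hrmin k hk
    rw [level_eq_card u huall, level_eq_card v hvall]
    apply Finset.card_le_card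
    intro j hj
    simp only [S, Finset.mem_filter, Finset.mem_univ, true_and] at hj ⊢
    obtain ⟨huj, hev⟩ := hj
    have hji : j ≠ i := by
      intro he
      rw [he, hru] at hev
      exact (Nat.not_odd_iff_even.mpr hev) hrv
    have hvj : v j = false := by rw [hu, cflip_ne v hji] at huj; exact huj
    refine ⟨hvj, ?_⟩
    rcases core v i hvi j hji hvj with heq | ⟨he1, he2⟩
    · rw [← hu] at heq; rw [heq]; exact hev
    · rw [← hu] at he1 he2
      rw [he2, ← he1, hru]
      rw [Nat.even_iff] at hev ⊢
      rw [Nat.odd_iff] at hrv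
      omega
  · -- Case A : v i = false, run above i even
    have hrv : Even (morrisRun v i) := by
      rw [hvi] at hd
      have h2 := hd.symm
      rw [decide_eq_false_iff_not] at h2
      exact Nat.not_odd_iff_even.mp h2
    by_cases huall : ∀ j, u j = true
    · rw [level_eq_zero u huall]; exact Nat.zero_le _
    have hui : u i = true := by rw [hu, cflip_self, hvi]; rfl
    have hflip : cflip u i = v := by rw [hu, cflip_cflip]
    rw [level_eq_card u huall, level_eq_card v hvall]
    apply Finset.card_le_card_of_injOn
      (fun j => if morrisRun v j = off i j then i else j)
    · -- maps S u into S v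
      intro j hj
      simp only [S, Finset.mem_coe, Finset.mem_filter, Finset.mem_univ, true_and] at hj ⊢
      obtain ⟨huj, hev⟩ := hj
      have hji : j ≠ i := by
        intro he; rw [he, hui] at huj; exact absurd huj (by simp)
      have hvj : v j = false := by rw [← hflip, cflip_ne u hji]; exact huj
      by_cases hsp : morrisRun v j = off i j
      · simp only [if_pos hsp]
        exact ⟨hvi, hrv⟩
      · simp only [if_neg hsp]
        rcases core u i hui j hji huj with heq | ⟨he1, he2⟩
        · rw [hflip] at heq
          exact ⟨hvj, heq ▸ hev⟩
        · rw [hflip] at he1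
          exact absurd he1 hsp
    · -- injective on S u
      intro a ha b hb hab
      simp only [S, Finset.coe_filter, Set.mem_setOf_eq, Finset.mem_univ, true_and]
        at ha hb
      have hai : a ≠ i := by
        intro he; rw [he, hui] at ha; exact absurd ha.1 (by simp)
      have hbi : b ≠ i := by
        intro he; rw [he, hui] at hb; exact absurd hb.1 (by simp)
      have hva : v a = false := by rw [← hflip, cflip_ne u hai]; exact ha.1
      have hvb : v b = false := by rw [← hflip, cflip_ne u hbi]; exact hb.1
      by_cases hsa : morrisRun v a = off i a <;> by_cases hsb : morrisRun v b = off i b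
      · exact uniq v i hva hvb hsa hsb
      · simp only [if_pos hsa, if_neg hsb] at hab; exact absurd hab.symm hbi
      · simp only [if_neg hsa, if_pos hsb] at hab; exact absurd hab hai
      · simpa [if_neg hsa, if_neg hsb] using hab
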